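/- For all real numbers k, l, every A ∈ (0,1), and every real n ≤ -1, there is a constant C > 0 (depending only on k, l, A) such that for every measurable function f : (0,A) × (0,A) → ℂ one has ∫₀^A ∫₀^A r₁ r₂^{2n-1} (-log r₁)^k (-log r₂)^{l-2} ( ∫₀^{r₂} ρ^{-n} |f(r₁, ρ)| dρ )² dr₂ dr₁ ≤ C · ∫₀^A ∫₀^A |f(r₁, r₂)|² r₁ r₂ (-log r₁)^k (-log r₂)^l dr₂ dr₁ (an inequality in [0, ∞]). -/

import Mathlib

open MeasureTheory Set
open scoped ENNReal

private lemma aux_sup {m x : ℝ} (hm : 0 < m) (hx0 : 0 < x) (hx1 : x < 1) :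
    x ^ (1/2 : ℝ) * (-Real.log x) ^ m ≤ (2*m) ^ m := by
  set t := -Real.log x with ht
  have htpos : 0 < t := by
    have := Real.log_neg hx0 hx1; simp only [ht]; linarith
  have hx : x ^ (1/2 : ℝ) = Real.exp (-(t/2)) := by
    rw [Real.rpow_def_of_pos hx0]
    congr 1
    have hl : Real.log x = -t := by simp [ht]
    rw [hl]; ring
  have h1 : t / (2*m) ≤ Real.exp (t/(2*m)) := by
    have := Real.add_one_le_exp (t/(2*m)); linarith
  have h2 : t ^ m ≤ (2*m) ^ m * Real.exp (t/2) := by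
    have he : t = (2*m) * (t/(2*m)) := by field_simp
    calc t ^ m = ((2*m) * (t/(2*m))) ^ m := by rw [← he]
      _ = (2*m) ^ m * (t/(2*m)) ^ m := Real.mul_rpow (by positivity) (by positivity)
      _ ≤ (2*m) ^ m * (Real.exp (t/(2*m))) ^ m := by
          have hr := Real.rpow_le_rpow (by positivity) h1 hm.le
          exact mul_le_mul_of_nonneg_left hr (by positivity)
      _ = (2*m) ^ m * Real.exp (t/2) := by
          rw [← Real.exp_mul]
          congr 1
          field_simp
  rw [hx]
  calc Real.exp (-(t/2)) * t ^ m ≤ Real.exp (-(t/2)) * ((2*m)^m * Real.exp (t/2)) :=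
        mul_le_mul_of_nonneg_left h2 (Real.exp_pos _).le
    _ = (2*m)^m * (Real.exp (-(t/2)) * Real.exp (t/2)) := by ring
    _ = (2*m)^m := by rw [← Real.exp_add]; simp

private lemma aux_two_rpow {a b m : ℝ} (ha : 0 ≤ a) (hb : 0 ≤ b) (hm : 0 ≤ m) :
    (a + b) ^ m ≤ 2 ^ m * (a ^ m + b ^ m) := by
  have h2 : (0:ℝ) ≤ 2 ^ m := Real.rpow_nonneg (by norm_num) m
  rcases le_total a b with h | h
  · calc (a+b)^m ≤ (2*b)^m := Real.rpow_le_rpow (by linarith) (by linarith) hm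
      _ = 2^m * b^m := Real.mul_rpow (by norm_num) hb
      _ ≤ 2^m * (a^m + b^m) := by
          have hA : (0:ℝ) ≤ a^m := Real.rpow_nonneg ha m
          nlinarith
  · calc (a+b)^m ≤ (2*a)^m := Real.rpow_le_rpow (by linarith) (by linarith) hm
      _ = 2^m * a^m := Real.mul_rpow (by norm_num) ha
      _ ≤ 2^m * (a^m + b^m) := by
          have hB : (0:ℝ) ≤ b^m := Real.rpow_nonneg hb m
          nlinarith

private lemma aux_const_bound {F : ℝ → ℝ} {K r : ℝ} (hr : 0 < r)
    (hpt : ∀ ρ ∈ Ioo (0:ℝ) r, F ρ ≤ K) :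
    ∫⁻ ρ in Ioo (0:ℝ) r, ENNReal.ofReal (F ρ) ≤ ENNReal.ofReal (K * r) := by
  calc ∫⁻ ρ in Ioo (0:ℝ) r, ENNReal.ofReal (F ρ)
      ≤ ∫⁻ _ in Ioo (0:ℝ) r, ENNReal.ofReal K :=
        setLIntegral_mono' measurableSet_Ioo fun ρ hρ => ENNReal.ofReal_le_ofReal (hpt ρ hρ)
    _ = ENNReal.ofReal K * volume (Ioo (0:ℝ) r) := setLIntegral_const _ _
    _ = ENNReal.ofReal K * ENNReal.ofReal r := by rw [Real.volume_Ioo, sub_zero]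
    _ = ENNReal.ofReal (K * r) := (ENNReal.ofReal_mul' hr.le).symm

private lemma stepJ (β A : ℝ) (hβ : β < 0) (hA0 : 0 < A) (hA1 : A < 1) :
    ∫⁻ r in Ioo (0:ℝ) A, ENNReal.ofReal (r ^ (-1:ℝ) * (-Real.log r) ^ (β-1))
      ≤ ENNReal.ofReal ((-Real.log A) ^ β / (-β)) := by
  have hlogA : 0 < -Real.log A := by have := Real.log_neg hA0 hA1; linarith
  have bound : ∀ ε : ℝ, 0 < ε → ε < A →
      ∫⁻ r in Ioo ε A, ENNReal.ofReal (r ^ (-1:ℝ) * (-Real.log r) ^ (β-1))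
        ≤ ENNReal.ofReal ((-Real.log A) ^ β / (-β)) := by
    intro ε hε hεA
    set φ : ℝ → ℝ := fun r => r ^ (-1:ℝ) * (-Real.log r) ^ (β-1) with hφ
    set H : ℝ → ℝ := fun r => (-Real.log r) ^ β / (-β) with hH
    have hsub : ∀ x ∈ Icc ε A, 0 < x ∧ 0 < -Real.log x := by
      intro x hx
      refine ⟨lt_of_lt_of_le hε hx.1, ?_⟩
      have : Real.log x < 0 :=
        Real.log_neg (lt_of_lt_of_le hε hx.1) (lt_of_le_of_lt hx.2 hA1)
      linarith
    have hcont : ContinuousOn φ (Icc ε A) := by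
      intro x hx
      apply ContinuousAt.continuousWithinAt
      obtain ⟨hx0, hlx⟩ := hsub x hx
      have c1 : ContinuousAt (fun r : ℝ => r ^ (-1:ℝ)) x :=
        Real.continuousAt_rpow_const x _ (Or.inl hx0.ne')
      have c2 : ContinuousAt (fun r : ℝ => (-Real.log r) ^ (β-1)) x :=
        ContinuousAt.rpow_const ((Real.continuousAt_log hx0.ne').neg) (Or.inl hlx.ne')
      exact c1.mul c2
    have hderiv : ∀ x ∈ Icc ε A, HasDerivAt H (φ x) x := by
      intro x hx
      obtain ⟨hx0, hlx⟩ := hsub x hx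
      have h1 : HasDerivAt (fun r : ℝ => -Real.log r) (-x⁻¹) x :=
        (Real.hasDerivAt_log hx0.ne').neg
      have h2 : HasDerivAt (fun r : ℝ => (-Real.log r) ^ β)
          (-x⁻¹ * β * (-Real.log x) ^ (β-1)) x :=
        HasDerivAt.rpow_const h1 (Or.inl hlx.ne')
      have h3 := h2.div_const (-β)
      rw [show φ x = -x⁻¹ * β * (-Real.log x) ^ (β-1) / -β from ?_]
      · exact h3
      show x ^ (-1:ℝ) * (-Real.log x) ^ (β-1) = _
      rw [Real.rpow_neg_one, eq_div_iff (neg_ne_zero.mpr hβ.ne)]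
      ring
    have hle : ε ≤ A := hεA.le
    have hInt : IntervalIntegrable φ volume ε A := hcont.intervalIntegrable_of_Icc hle
    have hFTC : ∫ r in ε..A, φ r = H A - H ε := by
      apply intervalIntegral.integral_eq_sub_of_hasDerivAt
      · intro x hx
        rw [uIcc_of_le hle] at hx
        exact hderiv x hx
      · exact hInt
    have hIntOn : IntegrableOn φ (Ioo ε A) volume :=
      (hcont.integrableOn_Icc).mono_set Ioo_subset_Icc_self
    have hnn : 0 ≤ᵐ[volume.restrict (Ioo ε A)] φ := by
      refine (ae_restrict_iff' measurableSet_Ioo).2 (ae_of_all _ fun r hr => ?_)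
      have h1 : (0:ℝ) < r := hε.trans hr.1
      apply mul_nonneg (Real.rpow_nonneg h1.le _)
      apply Real.rpow_nonneg
      have : Real.log r ≤ 0 := Real.log_nonpos h1.le (hr.2.trans hA1).le
      linarith
    calc ∫⁻ r in Ioo ε A, ENNReal.ofReal (φ r)
        = ENNReal.ofReal (∫ r in Ioo ε A, φ r) :=
          (ofReal_integral_eq_lintegral_ofReal hIntOn hnn).symm
      _ = ENNReal.ofReal (∫ r in ε..A, φ r) := by
          rw [intervalIntegral.integral_of_le hle, integral_Ioc_eq_integral_Ioo]
      _ = ENNReal.ofReal (H A - H ε) := by rw [hFTC]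
      _ ≤ ENNReal.ofReal (H A) := by
          apply ENNReal.ofReal_le_ofReal
          have hεlog : 0 < -Real.log ε := by
            have : Real.log ε < 0 := Real.log_neg hε (hεA.trans hA1)
            linarith
          have : 0 ≤ H ε := div_nonneg (Real.rpow_nonneg hεlog.le _) (by linarith)
          linarith
  set F : ℝ → ℝ≥0∞ := fun r => ENNReal.ofReal (r ^ (-1:ℝ) * (-Real.log r) ^ (β-1)) with hF
  have hFm : Measurable F := by measurability
  have hcover : Ioo (0:ℝ) A = ⋃ n : ℕ, Ioo (A / (n+2)) A := by
    ext x
    simp only [mem_Ioo, mem_iUnion]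
    constructor
    · rintro ⟨hx0, hxA⟩
      obtain ⟨n, hn⟩ := exists_nat_gt (A / x)
      refine ⟨n, ?_, hxA⟩
      rw [div_lt_iff₀ (by positivity)]
      have h2 : A < n * x := by
        rw [div_lt_iff₀ hx0] at hn; linarith
      nlinarith
    · rintro ⟨n, h1, h2⟩
      exact ⟨lt_trans (by positivity) h1, h2⟩
  have hdir : Directed (· ⊆ ·) (fun n : ℕ => Ioo (A / (n+2)) A) := by
    apply Monotone.directed_le
    intro i j hij
    apply Ioo_subset_Ioo_left
    have h2 : ((i:ℝ)+2) ≤ ((j:ℝ)+2) := by exact_mod_cast by omega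
    gcongr
  calc ∫⁻ r in Ioo (0:ℝ) A, F r = volume.withDensity F (Ioo 0 A) :=
        (withDensity_apply F measurableSet_Ioo).symm
    _ = ⨆ n : ℕ, volume.withDensity F (Ioo (A/(n+2)) A) := by
        rw [hcover, Directed.measure_iUnion hdir]
    _ ≤ ENNReal.ofReal ((-Real.log A) ^ β / (-β)) := by
        apply iSup_le; intro n
        rw [withDensity_apply F measurableSet_Ioo]
        apply bound
        · positivity
        · apply div_lt_self hA0
          linarith [Nat.cast_nonneg (α := ℝ) n]

private lemma stepBJ (l A : ℝ) (hA0 : 0 < A) (hA1 : A < 1) :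
    ∃ c₁ c₂ d : ℝ, 0 ≤ c₁ ∧ 0 ≤ c₂ ∧ 0 < d ∧
      (∫⁻ r in Ioo (0:ℝ) A,
          ENNReal.ofReal (r ^ (-1:ℝ) * (-Real.log r) ^ (l-2) * (c₁ * (-Real.log r) ^ (-l) + c₂))
        ≤ ENNReal.ofReal d) ∧
      ∀ n : ℝ, n ≤ -1 → ∀ r ∈ Ioo (0:ℝ) A,
        ∫⁻ ρ in Ioo (0:ℝ) r, ENNReal.ofReal (ρ ^ (-2*n-1) * (-Real.log ρ) ^ (-l))
          ≤ ENNReal.ofReal (r ^ (-2*n) * (c₁ * (-Real.log r) ^ (-l) + c₂)) := by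
  have hlog : ∀ x : ℝ, 0 < x → x < A → 0 < -Real.log x := fun x hx0 hxA => by
    have := Real.log_neg hx0 (hxA.trans hA1); linarith
  have hlogA : 0 < -Real.log A := by have := Real.log_neg hA0 hA1; linarith
  rcases le_or_gt 0 l with hl | hl
  · -- case l ≥ 0
    refine ⟨1, 0, (-Real.log A) ^ (-1:ℝ) / -(-1:ℝ), zero_le_one, le_refl 0,
      div_pos (Real.rpow_pos_of_pos hlogA _) (by norm_num), ?_, ?_⟩
    · have hcong : ∫⁻ r in Ioo (0:ℝ) A,
          ENNReal.ofReal (r ^ (-1:ℝ) * (-Real.log r) ^ (l-2) * (1 * (-Real.log r) ^ (-l) + 0))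
          = ∫⁻ r in Ioo (0:ℝ) A, ENNReal.ofReal (r ^ (-1:ℝ) * (-Real.log r) ^ ((-1:ℝ)-1)) := by
        apply setLIntegral_congr_fun measurableSet_Ioo
        intro r hr
        beta_reduce
        congr 1
        have h0 := hlog r hr.1 hr.2
        rw [one_mul, add_zero, mul_assoc, ← Real.rpow_add h0,
          show l - 2 + -l = (-1:ℝ)-1 from by ring]
      rw [hcong]
      exact stepJ (-1) A (by norm_num) hA0 hA1
    · intro n hn r hr
      have hr0 := hr.1
      have hlogr := hlog r hr.1 hr.2
      have e : r ^ (-2*n) * (1 * (-Real.log r) ^ (-l) + 0)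
          = r ^ (-2*n-1) * (-Real.log r) ^ (-l) * r := by
        rw [one_mul, add_zero, show (-2*n) = (-2*n-1) + 1 by ring, Real.rpow_add_one hr0.ne']
        ring
      rw [e]
      apply aux_const_bound hr0
      intro ρ hρ
      have hρ0 := hρ.1
      have hρr := hρ.2
      have hlogρ := hlog ρ hρ0 (hρr.trans hr.2)
      have h1 : ρ ^ (-2*n-1) ≤ r ^ (-2*n-1) :=
        Real.rpow_le_rpow hρ0.le hρr.le (by linarith)
      have h2 : (-Real.log ρ) ^ (-l) ≤ (-Real.log r) ^ (-l) := by
        apply Real.rpow_le_rpow_of_nonpos hlogr ?_ (by linarith)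
        have := Real.log_le_log hρ0 hρr.le
        linarith
      exact mul_le_mul h1 h2 (Real.rpow_nonneg hlogρ.le _) (Real.rpow_nonneg hr0.le _)
  · -- case l < 0
    have hm : 0 < -l := by linarith
    have hc1 : (0:ℝ) ≤ 2 ^ (-l) := Real.rpow_nonneg (by norm_num) _
    have hc2 : (0:ℝ) ≤ 2 ^ (-l) * (2*(-l)) ^ (-l) :=
      mul_nonneg hc1 (Real.rpow_nonneg (by positivity) _)
    have hbd1 : (0:ℝ) ≤ (-Real.log A) ^ (-1:ℝ) / -(-1:ℝ) :=
      div_nonneg (Real.rpow_nonneg hlogA.le _) (by norm_num)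
    have hbd2 : (0:ℝ) ≤ (-Real.log A) ^ (l-1) / -(l-1) :=
      div_nonneg (Real.rpow_nonneg hlogA.le _) (by linarith)
    refine ⟨2 ^ (-l), 2 ^ (-l) * (2*(-l)) ^ (-l),
      2 ^ (-l) * ((-Real.log A) ^ (-1:ℝ) / -(-1:ℝ))
        + 2 ^ (-l) * (2*(-l)) ^ (-l) * ((-Real.log A) ^ (l-1) / -(l-1)),
      hc1, hc2, ?_, ?_, ?_⟩
    · have t1 : 0 < 2 ^ (-l) * ((-Real.log A) ^ (-1:ℝ) / -(-1:ℝ)) := by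
        apply mul_pos (Real.rpow_pos_of_pos (by norm_num) _)
        exact div_pos (Real.rpow_pos_of_pos hlogA _) (by norm_num)
      have t2 : 0 ≤ 2 ^ (-l) * (2*(-l)) ^ (-l) * ((-Real.log A) ^ (l-1) / -(l-1)) :=
        mul_nonneg hc2 hbd2
      linarith
    · -- J bound
      calc ∫⁻ r in Ioo (0:ℝ) A,
            ENNReal.ofReal (r ^ (-1:ℝ) * (-Real.log r) ^ (l-2) *
              (2 ^ (-l) * (-Real.log r) ^ (-l) + 2 ^ (-l) * (2*(-l)) ^ (-l)))
          = ∫⁻ r in Ioo (0:ℝ) A,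
              (ENNReal.ofReal (2 ^ (-l) * (r ^ (-1:ℝ) * (-Real.log r) ^ ((-1:ℝ)-1)))
                + ENNReal.ofReal ((2 ^ (-l) * (2*(-l)) ^ (-l)) *
                    (r ^ (-1:ℝ) * (-Real.log r) ^ ((l-1)-1)))) := by
            apply setLIntegral_congr_fun measurableSet_Ioo
            intro r hr
            beta_reduce
            have hlogr := hlog r hr.1 hr.2
            have hr0 := hr.1
            rw [← ENNReal.ofReal_add
              (mul_nonneg hc1 (mul_nonneg (Real.rpow_nonneg hr0.le _) (Real.rpow_nonneg hlogr.le _)))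
              (mul_nonneg hc2 (mul_nonneg (Real.rpow_nonneg hr0.le _) (Real.rpow_nonneg hlogr.le _)))]
            congr 1
            have e1 : (-Real.log r) ^ (l-2) * (-Real.log r) ^ (-l) = (-Real.log r) ^ ((-1:ℝ)-1) := by
              rw [← Real.rpow_add hlogr, show l - 2 + -l = (-1:ℝ)-1 from by ring]
            have e2 : (-Real.log r) ^ (l-2) = (-Real.log r) ^ ((l-1)-1) := by
              rw [show (l-1)-1 = l - 2 from by ring]
            calc r ^ (-1:ℝ) * (-Real.log r) ^ (l-2) *
                  (2 ^ (-l) * (-Real.log r) ^ (-l) + 2 ^ (-l) * (2*(-l)) ^ (-l))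
                = 2 ^ (-l) * (r ^ (-1:ℝ) * ((-Real.log r) ^ (l-2) * (-Real.log r) ^ (-l)))
                  + (2 ^ (-l) * (2*(-l)) ^ (-l)) * (r ^ (-1:ℝ) * (-Real.log r) ^ (l-2)) := by ring
              _ = 2 ^ (-l) * (r ^ (-1:ℝ) * (-Real.log r) ^ ((-1:ℝ)-1))
                  + (2 ^ (-l) * (2*(-l)) ^ (-l)) * (r ^ (-1:ℝ) * (-Real.log r) ^ ((l-1)-1)) := by
                  rw [e1, e2]
        _ = ENNReal.ofReal (2 ^ (-l)) *
              (∫⁻ r in Ioo (0:ℝ) A, ENNReal.ofReal (r ^ (-1:ℝ) * (-Real.log r) ^ ((-1:ℝ)-1)))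
            + ENNReal.ofReal (2 ^ (-l) * (2*(-l)) ^ (-l)) *
              (∫⁻ r in Ioo (0:ℝ) A, ENNReal.ofReal (r ^ (-1:ℝ) * (-Real.log r) ^ ((l-1)-1))) := by
            rw [lintegral_add_left (by measurability)]
            congr 1
            · simp only [ENNReal.ofReal_mul hc1]
              exact lintegral_const_mul' _ _ ENNReal.ofReal_ne_top
            · simp only [ENNReal.ofReal_mul hc2]
              exact lintegral_const_mul' _ _ ENNReal.ofReal_ne_top
        _ ≤ ENNReal.ofReal (2 ^ (-l)) * ENNReal.ofReal ((-Real.log A) ^ (-1:ℝ) / -(-1:ℝ))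
            + ENNReal.ofReal (2 ^ (-l) * (2*(-l)) ^ (-l)) *
              ENNReal.ofReal ((-Real.log A) ^ (l-1) / -(l-1)) := by
            apply add_le_add
            · exact mul_le_mul_right (stepJ (-1) A (by norm_num) hA0 hA1) _
            · exact mul_le_mul_right (stepJ (l-1) A (by linarith) hA0 hA1) _
        _ = ENNReal.ofReal (2 ^ (-l) * ((-Real.log A) ^ (-1:ℝ) / -(-1:ℝ))
              + 2 ^ (-l) * (2*(-l)) ^ (-l) * ((-Real.log A) ^ (l-1) / -(l-1))) := by
            rw [← ENNReal.ofReal_mul hc1, ← ENNReal.ofReal_mul hc2,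
              ← ENNReal.ofReal_add (mul_nonneg hc1 hbd1) (mul_nonneg hc2 hbd2)]
    · -- W bound
      intro n hn r hr
      have hr0 := hr.1
      have hr1 : r < 1 := hr.2.trans hA1
      have hlogr := hlog r hr.1 hr.2
      have e : r ^ (-2*n) * (2 ^ (-l) * (-Real.log r) ^ (-l) + 2 ^ (-l) * (2*(-l)) ^ (-l))
          = (2 ^ (-l) * (r ^ (-2*n-1) * ((-Real.log r) ^ (-l) + (2*(-l)) ^ (-l)))) * r := by
        rw [show (-2*n) = (-2*n-1) + 1 by ring, Real.rpow_add_one hr0.ne']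
        ring
      rw [e]
      apply aux_const_bound hr0
      intro ρ hρ
      have hρ0 := hρ.1
      have hρr := hρ.2
      have hlogρ := hlog ρ hρ0 (hρr.trans hr.2)
      have hb : 0 ≤ Real.log r - Real.log ρ := by
        have := Real.log_le_log hρ0 hρr.le; linarith
      have h2r : ρ ^ (-2*n-1) ≤ r ^ (-2*n-1) := Real.rpow_le_rpow hρ0.le hρr.le (by linarith)
      have hxa : ρ / r < 1 := (div_lt_one hr0).2 hρr
      have hxa0 : 0 < ρ / r := div_pos hρ0 hr0
      have hlq : 0 < -Real.log (ρ/r) := by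
        have := Real.log_neg hxa0 hxa; linarith
      have hterm2 : ρ ^ (-2*n-1) * (Real.log r - Real.log ρ) ^ (-l)
          ≤ r ^ (-2*n-1) * (2*(-l)) ^ (-l) := by
        have hsplitρ : ρ ^ (-2*n-1) = ρ ^ (-2*n-1-1/2) * ρ ^ (1/2:ℝ) := by
          rw [← Real.rpow_add hρ0]; congr 1; ring
        have hlogq : Real.log r - Real.log ρ = -Real.log (ρ / r) := by
          rw [Real.log_div hρ0.ne' hr0.ne']; ring
        have hsup : (ρ/r) ^ (1/2:ℝ) * (-Real.log (ρ/r)) ^ (-l) ≤ (2*(-l)) ^ (-l) :=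
          aux_sup hm hxa0 hxa
        have hρhalf : ρ ^ (1/2:ℝ) = r ^ (1/2:ℝ) * (ρ/r) ^ (1/2:ℝ) := by
          rw [← Real.mul_rpow hr0.le hxa0.le]
          congr 1
          field_simp
        have h1 : ρ ^ (-2*n-1-1/2) ≤ r ^ (-2*n-1-1/2) :=
          Real.rpow_le_rpow hρ0.le hρr.le (by linarith)
        calc ρ ^ (-2*n-1) * (Real.log r - Real.log ρ) ^ (-l)
            = ρ ^ (-2*n-1-1/2) * (r ^ (1/2:ℝ) * ((ρ/r) ^ (1/2:ℝ) * (-Real.log (ρ/r)) ^ (-l))) := by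
              rw [hlogq, hsplitρ, hρhalf]; ring
          _ ≤ r ^ (-2*n-1-1/2) * (r ^ (1/2:ℝ) * (2*(-l)) ^ (-l)) := by
              apply mul_le_mul h1
              · exact mul_le_mul_of_nonneg_left hsup (Real.rpow_nonneg hr0.le _)
              · exact mul_nonneg (Real.rpow_nonneg hr0.le _)
                  (mul_nonneg (Real.rpow_nonneg hxa0.le _) (Real.rpow_nonneg hlq.le _))
              · exact Real.rpow_nonneg hr0.le _
          _ = r ^ (-2*n-1) * (2*(-l)) ^ (-l) := by
              rw [show (-2*n-1) = (-2*n-1-1/2) + (1/2:ℝ) by ring, Real.rpow_add hr0]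
              ring
      calc ρ ^ (-2*n-1) * (-Real.log ρ) ^ (-l)
          ≤ ρ ^ (-2*n-1) * (2 ^ (-l) * ((-Real.log r) ^ (-l) + (Real.log r - Real.log ρ) ^ (-l))) := by
            apply mul_le_mul_of_nonneg_left _ (Real.rpow_nonneg hρ0.le _)
            rw [show -Real.log ρ = (-Real.log r) + (Real.log r - Real.log ρ) from by ring]
            exact aux_two_rpow hlogr.le hb hm.le
        _ = 2 ^ (-l) * (ρ ^ (-2*n-1) * (-Real.log r) ^ (-l))
            + 2 ^ (-l) * (ρ ^ (-2*n-1) * (Real.log r - Real.log ρ) ^ (-l)) := by ring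
        _ ≤ 2 ^ (-l) * (r ^ (-2*n-1) * (-Real.log r) ^ (-l))
            + 2 ^ (-l) * (r ^ (-2*n-1) * (2*(-l)) ^ (-l)) := by
            apply add_le_add
            · exact mul_le_mul_of_nonneg_left
                (mul_le_mul_of_nonneg_right h2r (Real.rpow_nonneg hlogr.le _)) hc1
            · exact mul_le_mul_of_nonneg_left hterm2 hc1
        _ = 2 ^ (-l) * (r ^ (-2*n-1) * ((-Real.log r) ^ (-l) + (2*(-l)) ^ (-l))) := by ring

private lemma stepCS (l n r : ℝ) (hr0 : 0 < r) (hr1 : r < 1) (g : ℝ → ℝ≥0∞) (hg : Measurable g) :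
    (∫⁻ ρ in Ioo (0:ℝ) r, ENNReal.ofReal (ρ ^ (-n)) * g ρ) ^ 2
      ≤ (∫⁻ ρ in Ioo (0:ℝ) r, ENNReal.ofReal (ρ ^ (-2*n-1) * (-Real.log ρ) ^ (-l)))
        * ∫⁻ ρ in Ioo (0:ℝ) r, ENNReal.ofReal (ρ * (-Real.log ρ) ^ l) * (g ρ) ^ 2 := by
  have hlog : ∀ x : ℝ, 0 < x → x < r → 0 < -Real.log x := fun x hx0 hxr => by
    have := Real.log_neg hx0 (hxr.trans hr1); linarith
  set u : ℝ → ℝ≥0∞ := fun ρ => ENNReal.ofReal (ρ ^ (-n - 1/2) * (-Real.log ρ) ^ (-l/2)) with hu_def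
  set v : ℝ → ℝ≥0∞ := fun ρ => ENNReal.ofReal (ρ ^ (1/2:ℝ) * (-Real.log ρ) ^ (l/2)) * g ρ with hv_def
  have hu : Measurable u := by measurability
  have hv1 : Measurable (fun ρ : ℝ => ENNReal.ofReal (ρ ^ (1/2:ℝ) * (-Real.log ρ) ^ (l/2))) := by
    measurability
  have hv : Measurable v := hv1.mul hg
  have h22 : Real.HolderConjugate 2 2 := Real.holderConjugate_iff.mpr ⟨one_lt_two, by norm_num⟩
  have hold := ENNReal.lintegral_mul_le_Lp_mul_Lq (volume.restrict (Ioo (0:ℝ) r)) h22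
    hu.aemeasurable hv.aemeasurable
  have hL : ∫⁻ ρ in Ioo (0:ℝ) r, ENNReal.ofReal (ρ ^ (-n)) * g ρ
      = ∫⁻ ρ in Ioo (0:ℝ) r, (u * v) ρ := by
    apply setLIntegral_congr_fun measurableSet_Ioo
    intro ρ hρ
    have hρ0 := hρ.1
    have hlogρ := hlog ρ hρ.1 hρ.2
    simp only [Pi.mul_apply, hu_def, hv_def]
    have hreal : ρ ^ (-n-1/2) * (-Real.log ρ) ^ (-l/2) * (ρ ^ (1/2:ℝ) * (-Real.log ρ) ^ (l/2))
        = ρ ^ (-n) := by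
      rw [show ρ ^ (-n-1/2) * (-Real.log ρ) ^ (-l/2) * (ρ ^ (1/2:ℝ) * (-Real.log ρ) ^ (l/2))
          = (ρ ^ (-n-1/2) * ρ ^ (1/2:ℝ)) * ((-Real.log ρ) ^ (-l/2) * (-Real.log ρ) ^ (l/2)) from by
            ring,
        ← Real.rpow_add hρ0, ← Real.rpow_add hlogρ,
        show -n - 1/2 + 1/2 = -n from by ring, show -l/2 + l/2 = (0:ℝ) from by ring,
        Real.rpow_zero, mul_one]
    rw [← mul_assoc, ← ENNReal.ofReal_mul
      (mul_nonneg (Real.rpow_nonneg hρ0.le _) (Real.rpow_nonneg hlogρ.le _)), hreal]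
  have hu2 : ∫⁻ ρ in Ioo (0:ℝ) r, (u ρ) ^ (2:ℝ)
      = ∫⁻ ρ in Ioo (0:ℝ) r, ENNReal.ofReal (ρ ^ (-2*n-1) * (-Real.log ρ) ^ (-l)) := by
    apply setLIntegral_congr_fun measurableSet_Ioo
    intro ρ hρ
    have hρ0 := hρ.1
    have hlogρ := hlog ρ hρ.1 hρ.2
    simp only [hu_def]
    rw [ENNReal.ofReal_rpow_of_nonneg
      (mul_nonneg (Real.rpow_nonneg hρ0.le _) (Real.rpow_nonneg hlogρ.le _)) (by norm_num)]
    congr 1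
    rw [Real.mul_rpow (Real.rpow_nonneg hρ0.le _) (Real.rpow_nonneg hlogρ.le _),
      ← Real.rpow_mul hρ0.le, ← Real.rpow_mul hlogρ.le,
      show (-n - 1/2) * 2 = -2*n-1 from by ring, show -l/2 * 2 = -l from by ring]
  have hv2 : ∫⁻ ρ in Ioo (0:ℝ) r, (v ρ) ^ (2:ℝ)
      = ∫⁻ ρ in Ioo (0:ℝ) r, ENNReal.ofReal (ρ * (-Real.log ρ) ^ l) * (g ρ) ^ 2 := by
    apply setLIntegral_congr_fun measurableSet_Ioo
    intro ρ hρ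
    have hρ0 := hρ.1
    have hlogρ := hlog ρ hρ.1 hρ.2
    simp only [hv_def]
    rw [ENNReal.mul_rpow_of_nonneg _ _ (by norm_num : (0:ℝ) ≤ 2)]
    congr 1
    · rw [ENNReal.ofReal_rpow_of_nonneg
        (mul_nonneg (Real.rpow_nonneg hρ0.le _) (Real.rpow_nonneg hlogρ.le _)) (by norm_num)]
      congr 1
      rw [Real.mul_rpow (Real.rpow_nonneg hρ0.le _) (Real.rpow_nonneg hlogρ.le _),
        ← Real.rpow_mul hρ0.le, ← Real.rpow_mul hlogρ.le,
        show (1/2:ℝ) * 2 = 1 from by ring, show l/2 * 2 = l from by ring, Real.rpow_one]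
    · rw [show (2:ℝ) = ((2:ℕ):ℝ) from by norm_num, ENNReal.rpow_natCast]
  calc (∫⁻ ρ in Ioo (0:ℝ) r, ENNReal.ofReal (ρ ^ (-n)) * g ρ) ^ 2
      = (∫⁻ ρ in Ioo (0:ℝ) r, (u * v) ρ) ^ 2 := by rw [hL]
    _ ≤ ((∫⁻ ρ in Ioo (0:ℝ) r, (u ρ) ^ (2:ℝ)) ^ (1/2:ℝ)
          * (∫⁻ ρ in Ioo (0:ℝ) r, (v ρ) ^ (2:ℝ)) ^ (1/2:ℝ)) ^ 2 := by
        gcongr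
    _ = (∫⁻ ρ in Ioo (0:ℝ) r, (u ρ) ^ (2:ℝ)) * (∫⁻ ρ in Ioo (0:ℝ) r, (v ρ) ^ (2:ℝ)) := by
        rw [mul_pow,
          ← ENNReal.rpow_natCast ((∫⁻ ρ in Ioo (0:ℝ) r, (u ρ) ^ (2:ℝ)) ^ (1/2:ℝ)) 2,
          ← ENNReal.rpow_natCast ((∫⁻ ρ in Ioo (0:ℝ) r, (v ρ) ^ (2:ℝ)) ^ (1/2:ℝ)) 2,
          ← ENNReal.rpow_mul, ← ENNReal.rpow_mul]
        norm_num
    _ = (∫⁻ ρ in Ioo (0:ℝ) r, ENNReal.ofReal (ρ ^ (-2*n-1) * (-Real.log ρ) ^ (-l)))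
        * ∫⁻ ρ in Ioo (0:ℝ) r, ENNReal.ofReal (ρ * (-Real.log ρ) ^ l) * (g ρ) ^ 2 := by
        rw [hu2, hv2]

private lemma one_var (l A : ℝ) (hA0 : 0 < A) (hA1 : A < 1) :
    ∃ C : ℝ, 0 < C ∧ ∀ n : ℝ, n ≤ -1 → ∀ g : ℝ → ℝ≥0∞, Measurable g →
      ∫⁻ r in Ioo (0:ℝ) A, ENNReal.ofReal (r ^ (2*n-1) * (-Real.log r) ^ (l-2)) *
          (∫⁻ ρ in Ioo (0:ℝ) r, ENNReal.ofReal (ρ ^ (-n)) * g ρ) ^ 2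
        ≤ ENNReal.ofReal C *
          ∫⁻ r in Ioo (0:ℝ) A, ENNReal.ofReal (r * (-Real.log r) ^ l) * (g r) ^ 2 := by
  obtain ⟨c₁, c₂, d, hc₁, hc₂, hd, hJ, hW⟩ := stepBJ l A hA0 hA1
  refine ⟨d, hd, ?_⟩
  intro n hn g hg
  set I := ∫⁻ r in Ioo (0:ℝ) A, ENNReal.ofReal (r * (-Real.log r) ^ l) * (g r) ^ 2 with hI_def
  by_cases hI : I = ⊤
  · rw [hI, ENNReal.mul_top (ENNReal.ofReal_pos.mpr hd).ne']
    exact le_top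
  have hpt : ∀ r ∈ Ioo (0:ℝ) A,
      ENNReal.ofReal (r ^ (2*n-1) * (-Real.log r) ^ (l-2)) *
        (∫⁻ ρ in Ioo (0:ℝ) r, ENNReal.ofReal (ρ ^ (-n)) * g ρ) ^ 2
      ≤ ENNReal.ofReal (r ^ (-1:ℝ) * (-Real.log r) ^ (l-2) * (c₁ * (-Real.log r) ^ (-l) + c₂)) * I := by
    intro r hr
    have hr0 := hr.1
    have hr1 : r < 1 := hr.2.trans hA1
    have hlogr : 0 < -Real.log r := by have := Real.log_neg hr0 hr1; linarith
    have hCS := stepCS l n r hr0 hr1 g hg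
    have hWr := hW n hn r hr
    have hV : ∫⁻ ρ in Ioo (0:ℝ) r, ENNReal.ofReal (ρ * (-Real.log ρ) ^ l) * (g ρ) ^ 2 ≤ I :=
      lintegral_mono_set (Ioo_subset_Ioo_right hr.2.le)
    calc ENNReal.ofReal (r ^ (2*n-1) * (-Real.log r) ^ (l-2)) *
          (∫⁻ ρ in Ioo (0:ℝ) r, ENNReal.ofReal (ρ ^ (-n)) * g ρ) ^ 2
        ≤ ENNReal.ofReal (r ^ (2*n-1) * (-Real.log r) ^ (l-2)) *
            (ENNReal.ofReal (r ^ (-2*n) * (c₁ * (-Real.log r) ^ (-l) + c₂)) * I) := by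
          apply mul_le_mul_right
          exact hCS.trans (mul_le_mul' hWr hV)
      _ = ENNReal.ofReal (r ^ (2*n-1) * (-Real.log r) ^ (l-2) *
            (r ^ (-2*n) * (c₁ * (-Real.log r) ^ (-l) + c₂))) * I := by
          rw [← mul_assoc, ← ENNReal.ofReal_mul
            (mul_nonneg (Real.rpow_nonneg hr0.le _) (Real.rpow_nonneg hlogr.le _))]
      _ = ENNReal.ofReal (r ^ (-1:ℝ) * (-Real.log r) ^ (l-2) *
            (c₁ * (-Real.log r) ^ (-l) + c₂)) * I := by
          congr 2
          rw [show r ^ (2*n-1) * (-Real.log r) ^ (l-2) *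
                (r ^ (-2*n) * (c₁ * (-Real.log r) ^ (-l) + c₂))
              = (r ^ (2*n-1) * r ^ (-2*n)) *
                ((-Real.log r) ^ (l-2) * (c₁ * (-Real.log r) ^ (-l) + c₂)) from by ring,
            ← Real.rpow_add hr0, show 2*n - 1 + -2*n = (-1:ℝ) from by ring]
          ring
  calc ∫⁻ r in Ioo (0:ℝ) A, ENNReal.ofReal (r ^ (2*n-1) * (-Real.log r) ^ (l-2)) *
        (∫⁻ ρ in Ioo (0:ℝ) r, ENNReal.ofReal (ρ ^ (-n)) * g ρ) ^ 2
      ≤ ∫⁻ r in Ioo (0:ℝ) A,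
          ENNReal.ofReal (r ^ (-1:ℝ) * (-Real.log r) ^ (l-2) * (c₁ * (-Real.log r) ^ (-l) + c₂)) * I :=
        setLIntegral_mono' measurableSet_Ioo hpt
    _ = (∫⁻ r in Ioo (0:ℝ) A,
          ENNReal.ofReal (r ^ (-1:ℝ) * (-Real.log r) ^ (l-2) * (c₁ * (-Real.log r) ^ (-l) + c₂))) * I :=
        lintegral_mul_const' _ _ hI
    _ ≤ ENNReal.ofReal d * I := mul_le_mul_left hJ _

theorem hardy_weighted_two_variables (k l : ℝ) (A : ℝ) (hA0 : 0 < A) (hA1 : A < 1) :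
    ∃ C : ℝ, 0 < C ∧ ∀ n : ℝ, n ≤ -1 →
      ∀ f : ℝ → ℝ → ℂ, Measurable (Function.uncurry f) →
      ∫⁻ r1 in Set.Ioo (0 : ℝ) A, ∫⁻ r2 in Set.Ioo (0 : ℝ) A,
          ENNReal.ofReal
              (r1 * r2 ^ (2 * n - 1) * (-Real.log r1) ^ k * (-Real.log r2) ^ (l - 2)) *
            (∫⁻ ρ in Set.Ioo (0 : ℝ) r2,
              ENNReal.ofReal (ρ ^ (-n) * ‖f r1 ρ‖)) ^ 2
        ≤ ENNReal.ofReal C *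
          ∫⁻ r1 in Set.Ioo (0 : ℝ) A, ∫⁻ r2 in Set.Ioo (0 : ℝ) A,
            ENNReal.ofReal (‖f r1 r2‖ ^ 2 * r1 * r2 *
              (-Real.log r1) ^ k * (-Real.log r2) ^ l) := by
  obtain ⟨C, hC, hmain⟩ := one_var l A hA0 hA1
  refine ⟨C, hC, ?_⟩
  intro n hn f hf
  have key : ∀ r1 ∈ Ioo (0:ℝ) A,
      ∫⁻ r2 in Ioo (0:ℝ) A,
          ENNReal.ofReal (r1 * r2 ^ (2 * n - 1) * (-Real.log r1) ^ k * (-Real.log r2) ^ (l - 2)) *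
            (∫⁻ ρ in Ioo (0:ℝ) r2, ENNReal.ofReal (ρ ^ (-n) * ‖f r1 ρ‖)) ^ 2
        ≤ ENNReal.ofReal C * ∫⁻ r2 in Ioo (0:ℝ) A,
            ENNReal.ofReal (‖f r1 r2‖ ^ 2 * r1 * r2 *
              (-Real.log r1) ^ k * (-Real.log r2) ^ l) := by
    intro r1 hr1
    have hr10 := hr1.1
    have hr11 : r1 < 1 := hr1.2.trans hA1
    have hlog1 : 0 < -Real.log r1 := by have := Real.log_neg hr10 hr11; linarith
    have hw1 : 0 ≤ r1 * (-Real.log r1) ^ k := mul_nonneg hr10.le (Real.rpow_nonneg hlog1.le _)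
    set g : ℝ → ℝ≥0∞ := fun ρ => ENNReal.ofReal (‖f r1 ρ‖) with hg_def
    have hgm : Measurable g := by
      have h1 : Measurable (fun ρ => f r1 ρ) := hf.comp (measurable_const.prodMk measurable_id)
      exact (continuous_norm.measurable.comp h1).ennreal_ofReal
    have hinner : ∀ r2 ∈ Ioo (0:ℝ) A,
        ∫⁻ ρ in Ioo (0:ℝ) r2, ENNReal.ofReal (ρ ^ (-n) * ‖f r1 ρ‖)
          = ∫⁻ ρ in Ioo (0:ℝ) r2, ENNReal.ofReal (ρ ^ (-n)) * g ρ := by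
      intro r2 hr2
      apply setLIntegral_congr_fun measurableSet_Ioo
      intro ρ hρ
      beta_reduce
      rw [ENNReal.ofReal_mul (Real.rpow_nonneg hρ.1.le _)]
    calc ∫⁻ r2 in Ioo (0:ℝ) A,
          ENNReal.ofReal (r1 * r2 ^ (2 * n - 1) * (-Real.log r1) ^ k * (-Real.log r2) ^ (l - 2)) *
            (∫⁻ ρ in Ioo (0:ℝ) r2, ENNReal.ofReal (ρ ^ (-n) * ‖f r1 ρ‖)) ^ 2
        = ∫⁻ r2 in Ioo (0:ℝ) A, ENNReal.ofReal (r1 * (-Real.log r1) ^ k) *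
            (ENNReal.ofReal (r2 ^ (2 * n - 1) * (-Real.log r2) ^ (l - 2)) *
              (∫⁻ ρ in Ioo (0:ℝ) r2, ENNReal.ofReal (ρ ^ (-n)) * g ρ) ^ 2) := by
          apply setLIntegral_congr_fun measurableSet_Ioo
          intro r2 hr2
          beta_reduce
          rw [hinner r2 hr2, ← mul_assoc, ← ENNReal.ofReal_mul hw1,
            show r1 * (-Real.log r1) ^ k * (r2 ^ (2 * n - 1) * (-Real.log r2) ^ (l - 2))
              = r1 * r2 ^ (2 * n - 1) * (-Real.log r1) ^ k * (-Real.log r2) ^ (l - 2) from by ring]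
      _ = ENNReal.ofReal (r1 * (-Real.log r1) ^ k) *
            ∫⁻ r2 in Ioo (0:ℝ) A, ENNReal.ofReal (r2 ^ (2 * n - 1) * (-Real.log r2) ^ (l - 2)) *
              (∫⁻ ρ in Ioo (0:ℝ) r2, ENNReal.ofReal (ρ ^ (-n)) * g ρ) ^ 2 :=
          lintegral_const_mul' _ _ ENNReal.ofReal_ne_top
      _ ≤ ENNReal.ofReal (r1 * (-Real.log r1) ^ k) *
            (ENNReal.ofReal C *
              ∫⁻ r2 in Ioo (0:ℝ) A, ENNReal.ofReal (r2 * (-Real.log r2) ^ l) * (g r2) ^ 2) :=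
          mul_le_mul_right (hmain n hn g hgm) _
      _ = ENNReal.ofReal C * ∫⁻ r2 in Ioo (0:ℝ) A, ENNReal.ofReal (r1 * (-Real.log r1) ^ k) *
            (ENNReal.ofReal (r2 * (-Real.log r2) ^ l) * (g r2) ^ 2) := by
          rw [lintegral_const_mul' (ENNReal.ofReal (r1 * (-Real.log r1) ^ k)) _
            ENNReal.ofReal_ne_top]
          ring
      _ = ENNReal.ofReal C * ∫⁻ r2 in Ioo (0:ℝ) A,
            ENNReal.ofReal (‖f r1 r2‖ ^ 2 * r1 * r2 *
              (-Real.log r1) ^ k * (-Real.log r2) ^ l) := by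
          congr 1
          apply setLIntegral_congr_fun measurableSet_Ioo
          intro r2 hr2
          have hr20 := hr2.1
          have hlog2 : 0 < -Real.log r2 := by
            have := Real.log_neg hr20 (hr2.2.trans hA1); linarith
          have hw2 : 0 ≤ r2 * (-Real.log r2) ^ l :=
            mul_nonneg hr20.le (Real.rpow_nonneg hlog2.le _)
          simp only [hg_def]
          rw [← ENNReal.ofReal_pow (norm_nonneg _), ← ENNReal.ofReal_mul hw2,
            ← ENNReal.ofReal_mul hw1,
            show r1 * (-Real.log r1) ^ k * (r2 * (-Real.log r2) ^ l * ‖f r1 r2‖ ^ 2)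
              = ‖f r1 r2‖ ^ 2 * r1 * r2 *
                  (-Real.log r1) ^ k * (-Real.log r2) ^ l from by ring]
  calc ∫⁻ r1 in Ioo (0:ℝ) A, ∫⁻ r2 in Ioo (0:ℝ) A,
        ENNReal.ofReal (r1 * r2 ^ (2 * n - 1) * (-Real.log r1) ^ k * (-Real.log r2) ^ (l - 2)) *
          (∫⁻ ρ in Ioo (0:ℝ) r2, ENNReal.ofReal (ρ ^ (-n) * ‖f r1 ρ‖)) ^ 2
      ≤ ∫⁻ r1 in Ioo (0:ℝ) A, ENNReal.ofReal C * ∫⁻ r2 in Ioo (0:ℝ) A,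
          ENNReal.ofReal (‖f r1 r2‖ ^ 2 * r1 * r2 *
            (-Real.log r1) ^ k * (-Real.log r2) ^ l) :=
        setLIntegral_mono' measurableSet_Ioo key
    _ = ENNReal.ofReal C * ∫⁻ r1 in Ioo (0:ℝ) A, ∫⁻ r2 in Ioo (0:ℝ) A,
          ENNReal.ofReal (‖f r1 r2‖ ^ 2 * r1 * r2 *
            (-Real.log r1) ^ k * (-Real.log r2) ^ l) :=
        lintegral_const_mul' _ _ ENNReal.ofReal_ne_top
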